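/- arXiv:1705.10462 — 8 statements merged into one kernel-verified Lean document; each statement's English description precedes it below -/
import Mathlib

section
/- Let N ≥ 2 and let ρ be an N×N density matrix. Then the ternary complementarity relation P(ρ)² + C(ρ)² + S_L(ρ) ≤ 1 holds, where P is the which-path predictability, C is the l₁ quantum coherence, and S_L is the normalized linear entropy. -/
open Matrix BigOperators ComplexOrder

/-- The largest diagonal entry (as a real number) of a complex matrix. -/
noncomputable def maxDiag (N : ℕ) (ρ : Matrix (Fin N) (Fin N) ℂ) : ℝ :=
  ⨆ k, (ρ k k).re

/-- The which-path predictability P(ρ) = (N·p₁ − 1)/(N − 1). -/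
noncomputable def pred (N : ℕ) (ρ : Matrix (Fin N) (Fin N) ℂ) : ℝ :=
  ((N : ℝ) * maxDiag N ρ - 1) / ((N : ℝ) - 1)

/-- The l₁ quantum coherence C(ρ) = (1/(N−1)) ∑_{i ≠ k} |ρ_ik|. -/
noncomputable def coh (N : ℕ) (ρ : Matrix (Fin N) (Fin N) ℂ) : ℝ :=
  (1 / ((N : ℝ) - 1)) * ∑ i, ∑ k, if i ≠ k then ‖ρ i k‖ else 0

/-- The normalized linear entropy S_L(ρ) = N(1 − tr(ρ²))/(N − 1). -/
noncomputable def linEnt (N : ℕ) (ρ : Matrix (Fin N) (Fin N) ℂ) : ℝ :=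
  (N : ℝ) * (1 - ((ρ * ρ).trace).re) / ((N : ℝ) - 1)

open Finset

lemma offsum {N : ℕ} (f : Fin N → Fin N → ℝ) :
    ∑ i, ∑ k, (if i ≠ k then f i k else 0) = ∑ x ∈ Finset.univ.offDiag, f x.1 x.2 := by
  rw [← Finset.sum_product']
  rw [show (Finset.univ.offDiag : Finset (Fin N × Fin N)) = (Finset.univ ×ˢ Finset.univ).filter (fun x => x.1 ≠ x.2) by ext x; simp, Finset.sum_filter]

/-- The ternary complementarity relation: P(ρ)² + C(ρ)² + S_L(ρ) ≤ 1. -/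
theorem stmt4 {N : ℕ} (hN : 2 ≤ N) (ρ : Matrix (Fin N) (Fin N) ℂ)
    (hρ : ρ.PosSemidef) (htr : ρ.trace = 1) :
    (pred N ρ) ^ 2 + (coh N ρ) ^ 2 + linEnt N ρ ≤ 1 := by
  haveI : NeZero N := ⟨by omega⟩
  set p : Fin N → ℝ := fun k => (ρ k k).re with hp
  have hdiagreal : ∀ k, Complex.normSq (ρ k k) = p k ^ 2 := by
    intro k
    have h := hρ.1.apply k k
    have him : (ρ k k).im = 0 := by
      have := congrArg Complex.im h
      simp at this; linarith
    simp [Complex.normSq_apply, him, hp, sq]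
  have h1 : ∑ k, p k = 1 := by
    have := congrArg Complex.re htr
    simpa [Matrix.trace, Matrix.diag, Complex.re_sum] using this
  have h0 : ∀ k, 0 ≤ p k := by
    intro k
    have := hρ.re_dotProduct_nonneg (Pi.single k 1)
    simpa [dotProduct, Pi.single_apply, mulVec, Finset.sum_ite_eq, Finset.sum_ite_eq'] using this
  obtain ⟨j, hj⟩ := Finite.exists_max p
  have hmax : maxDiag N ρ = p j :=
    le_antisymm (ciSup_le hj) (le_ciSup (Set.Finite.bddAbove (Set.finite_range p)) j)
  set c : ℝ := (N : ℝ) - 1 with hcdef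
  have hc : 0 < c := by
    have : (2 : ℝ) ≤ (N : ℝ) := by exact_mod_cast hN
    simp only [hcdef]; linarith
  set A : ℝ := ∑ k, p k ^ 2 with hA
  set O : ℝ := ∑ x ∈ Finset.univ.offDiag, Complex.normSq (ρ x.1 x.2) with hO
  set L : ℝ := ∑ i, ∑ k, if i ≠ k then ‖ρ i k‖ else 0 with hL
  -- trace of ρ²
  have hT : ((ρ * ρ).trace).re = A + O := by
    have htr2 : ((ρ * ρ).trace).re = ∑ i, ∑ k, Complex.normSq (ρ i k) := by
      rw [Matrix.trace]
      simp only [Matrix.diag, Matrix.mul_apply]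
      rw [Complex.re_sum]
      congr 1; ext i
      rw [Complex.re_sum]
      congr 1; ext k
      rw [← hρ.1.apply i k]
      simp [Complex.mul_conj', Complex.normSq_apply]
    rw [htr2]
    have : ∀ i : Fin N, ∑ k, Complex.normSq (ρ i k)
        = Complex.normSq (ρ i i) + ∑ k, (if i ≠ k then Complex.normSq (ρ i k) else 0) := by
      intro i
      rw [← Finset.add_sum_erase _ _ (Finset.mem_univ i)]
      congr 1
      rw [← Finset.sum_filter, Finset.filter_ne]
    rw [Finset.sum_congr rfl fun i _ => this i, Finset.sum_add_distrib, offsum]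
    congr 1
    exact Finset.sum_congr rfl fun k _ => hdiagreal k
  -- Cauchy-Schwarz on erase j
  have hcard1 : ((Finset.univ.erase j).card : ℝ) = c := by
    rw [Finset.card_erase_of_mem (Finset.mem_univ j), Finset.card_univ, Fintype.card_fin,
      Nat.cast_sub (by omega : 1 ≤ N)]
    simp [hcdef]
  have hCS1 : (1 - p j) ^ 2 ≤ c * (A - p j ^ 2) := by
    have := sq_sum_le_card_mul_sum_sq (s := Finset.univ.erase j) (f := p)
    have hs1 : ∑ k ∈ Finset.univ.erase j, p k = 1 - p j := by
      have h := Finset.add_sum_erase Finset.univ p (Finset.mem_univ j)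
      rw [h1] at h; linarith
    have hs2 : ∑ k ∈ Finset.univ.erase j, p k ^ 2 = A - p j ^ 2 := by
      have h := Finset.add_sum_erase Finset.univ (fun k => p k ^ 2) (Finset.mem_univ j)
      rw [hA, ← h]; ring
    calc (1 - p j) ^ 2 = (∑ k ∈ Finset.univ.erase j, p k) ^ 2 := by rw [hs1]
      _ ≤ (Finset.univ.erase j).card * ∑ k ∈ Finset.univ.erase j, p k ^ 2 := by
          exact_mod_cast this
      _ = c * (A - p j ^ 2) := by rw [hcard1, hs2]
  -- Cauchy-Schwarz off-diagonal
  have hcard2 : ((Finset.univ.offDiag : Finset (Fin N × Fin N)).card : ℝ) = (N : ℝ) * c := by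
    rw [Finset.offDiag_card]
    simp only [Finset.card_univ, Fintype.card_fin]
    rw [Nat.cast_sub (Nat.le_mul_of_pos_left N (by omega))]
    push_cast
    simp only [hcdef]
    ring
  have hCS2 : L ^ 2 ≤ (N : ℝ) * c * O := by
    have hLrw : L = ∑ x ∈ Finset.univ.offDiag, ‖ρ x.1 x.2‖ := by
      rw [hL, offsum]
    have hOrw : O = ∑ x ∈ Finset.univ.offDiag, ‖ρ x.1 x.2‖ ^ 2 := by
      rw [hO]; exact Finset.sum_congr rfl fun x _ => (Complex.sq_norm _).symm
    have := sq_sum_le_card_mul_sum_sq (s := (Finset.univ.offDiag : Finset (Fin N × Fin N)))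
      (f := fun x => ‖ρ x.1 x.2‖)
    rw [hLrw, hOrw]
    calc (∑ x ∈ Finset.univ.offDiag, ‖ρ x.1 x.2‖) ^ 2
        ≤ (Finset.univ.offDiag.card : ℝ) * ∑ x ∈ Finset.univ.offDiag, ‖ρ x.1 x.2‖ ^ 2 := by
          exact_mod_cast this
      _ = (N : ℝ) * c * ∑ x ∈ Finset.univ.offDiag, ‖ρ x.1 x.2‖ ^ 2 := by rw [hcard2]
  -- main algebra
  have hNnn : (0 : ℝ) ≤ N := Nat.cast_nonneg N
  have key : ((N : ℝ) * p j - 1) ^ 2 + L ^ 2 + c * ((N : ℝ) * (1 - ((ρ * ρ).trace).re)) ≤ c ^ 2 := by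
    rw [hT]
    have h1' := mul_le_mul_of_nonneg_left hCS1 hNnn
    have hcN : (N : ℝ) = c + 1 := by simp [hcdef]
    have hid : ((N : ℝ) * p j - 1) ^ 2 = (N : ℝ) * c * p j ^ 2 + (N : ℝ) * (1 - p j) ^ 2 - c := by
      rw [hcN]; ring
    have hc2 : c ^ 2 = c * (N : ℝ) - c := by rw [hcN]; ring
    nlinarith [h1', hCS2, hid, hc2]
  have hgoal : (pred N ρ) ^ 2 + (coh N ρ) ^ 2 + linEnt N ρ
      = (((N : ℝ) * p j - 1) ^ 2 + L ^ 2 + c * ((N : ℝ) * (1 - ((ρ * ρ).trace).re))) / c ^ 2 := by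
    rw [pred, coh, linEnt, hmax, ← hL, ← hcdef]
    field_simp
  rw [hgoal]
  rw [div_le_one (by positivity)]
  linarith [key]
end

section
/- Let N ≥ 2 and let ρ be an N×N density matrix. Then the wave-particle duality relation P(ρ)² + C(ρ)² ≤ 1 holds, where P is the which-path predictability and C is the l₁ quantum coherence. -/
open Matrix BigOperators ComplexOrder

lemma psd_offdiag {N : ℕ} (ρ : Matrix (Fin N) (Fin N) ℂ) (hρ : ρ.PosSemidef)
    (i k : Fin N) :
    (‖ρ i k‖)^2 ≤ (ρ i i).re * (ρ k k).re := by
  have hdi : 0 ≤ (ρ i i).re := by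
    have h := hρ.re_dotProduct_nonneg (Pi.single i 1)
    simpa [single_dotProduct, Matrix.mulVec_single, ← Pi.single_star] using h
  have hdk : 0 ≤ (ρ k k).re := by
    have h := hρ.re_dotProduct_nonneg (Pi.single k 1)
    simpa [single_dotProduct, Matrix.mulVec_single, ← Pi.single_star] using h
  by_cases hik : i = k
  · subst hik
    have : ((ρ i i).re : ℂ) = ρ i i := hρ.1.coe_re_apply_self i
    have habs : ‖ρ i i‖ = (ρ i i).re := by
      rw [← this]; simp [Complex.norm_real, Real.norm_eq_abs, abs_of_nonneg hdi]
    rw [habs, sq]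
  set c : ℝ := ‖ρ i k‖ with hc
  have hc0 : 0 ≤ c := norm_nonneg _
  have hdiagi : (((ρ i i).re : ℝ) : ℂ) = ρ i i := hρ.1.coe_re_apply_self i
  have hdiagk : (((ρ k k).re : ℝ) : ℂ) = ρ k k := hρ.1.coe_re_apply_self k
  have hki : ρ k i = (starRingEnd ℂ) (ρ i k) := by
    rw [← hρ.1.apply k i]; rfl
  have huu : ρ i k * (starRingEnd ℂ) (ρ i k) = ((c^2 : ℝ) : ℂ) := by
    rw [Complex.mul_conj]; norm_cast; rw [hc, Complex.sq_norm]
  have quad : ∀ t : ℝ, 0 ≤ (ρ i i).re * c^2 - 2*t*c^3 + t^2*c^2*((ρ k k).re) := by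
    intro t
    have h := hρ.re_dotProduct_nonneg
      (Pi.single i ((c:ℂ)) + Pi.single k ((-(t:ℝ) : ℂ) * (starRingEnd ℂ) (ρ i k)))
    have hQ : (star (Pi.single i ((c:ℂ)) + Pi.single k ((-(t:ℝ) : ℂ) * (starRingEnd ℂ) (ρ i k)))) ⬝ᵥ
        (ρ *ᵥ (Pi.single i ((c:ℂ)) + Pi.single k ((-(t:ℝ) : ℂ) * (starRingEnd ℂ) (ρ i k))))
        = (((ρ i i).re * c^2 - 2*t*c^3 + t^2*c^2*((ρ k k).re) : ℝ) : ℂ) := by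
      simp only [star_add, ← Pi.single_star, Matrix.mulVec_add, Matrix.mulVec_single,
        add_dotProduct, single_dotProduct, Pi.add_apply,
        Pi.smul_apply, op_smul_eq_mul, Matrix.col_apply]
      rw [hki, ← hdiagi, ← hdiagk]
      simp only [star_mul', star_neg, Complex.star_def, Complex.conj_conj, Complex.conj_ofReal]
      push_cast at huu ⊢
      simp only [Complex.ofReal_re]
      linear_combination ((t:ℂ)^2 * (((ρ k k).re : ℝ) : ℂ) - 2*(c:ℂ)*(t:ℂ)) * huu
    rw [hQ] at h
    simp only [RCLike.re_to_complex, Complex.ofReal_re] at h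
    exact h
  rcases eq_or_lt_of_le hc0 with h0 | hcpos
  · rw [← h0]; simpa using mul_nonneg hdi hdk
  · have quad' : ∀ t : ℝ, 0 ≤ (ρ i i).re - 2*t*c + t^2*((ρ k k).re) := by
      intro t
      have h := quad t
      have hc2 : 0 < c^2 := by positivity
      nlinarith [h, hc2]
    rcases eq_or_lt_of_le hdk with hdk0 | hdk0
    · exfalso
      have h := quad' (((ρ i i).re + 1)/(2*c))
      rw [← hdk0] at h
      have h2 : (((ρ i i).re + 1)/(2*c))*c = ((ρ i i).re + 1)/2 := by field_simp
      nlinarith [h, h2]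
    · have h := quad' (c / (ρ k k).re)
      have h2 : (c / (ρ k k).re) * (ρ k k).re = c := div_mul_cancel₀ _ (ne_of_gt hdk0)
      nlinarith [mul_nonneg h hdk0.le, h2, hdk0]

set_option maxHeartbeats 1000000 in
/-- The wave-particle duality relation: P(ρ)² + C(ρ)² ≤ 1. -/
theorem stmt6 {N : ℕ} (hN : 2 ≤ N) (ρ : Matrix (Fin N) (Fin N) ℂ)
    (hρ : ρ.PosSemidef) (htr : ρ.trace = 1) :
    (pred N ρ) ^ 2 + (coh N ρ) ^ 2 ≤ 1 := by
  haveI : NeZero N := ⟨by omega⟩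
  have hn2 : (2:ℝ) ≤ (N:ℝ) := by exact_mod_cast hN
  set n : ℝ := (N:ℝ) with hn
  set m : ℝ := n - 1 with hmdef
  have hm : (0:ℝ) < m := by rw [hmdef]; linarith
  set d : Fin N → ℝ := fun i => (ρ i i).re with hd
  have hd0 : ∀ i, 0 ≤ d i := by
    intro i
    have h := hρ.re_dotProduct_nonneg (Pi.single i 1)
    simpa [single_dotProduct, Matrix.mulVec_single, ← Pi.single_star] using h
  have hsum : ∑ i, d i = 1 := by
    have h1 : (ρ.trace).re = 1 := by rw [htr]; simp
    rw [Matrix.trace] at h1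
    simpa [Matrix.diag, Complex.re_sum] using h1
  obtain ⟨k₀, hk₀⟩ := Finite.exists_max d
  have hbdd : BddAbove (Set.range fun k => (ρ k k).re) :=
    Set.Finite.bddAbove (Set.finite_range _)
  have hxmax : maxDiag N ρ = d k₀ :=
    le_antisymm (ciSup_le fun i => hk₀ i) (le_ciSup hbdd k₀)
  set x : ℝ := d k₀ with hxdef
  have hx1 : x ≤ 1 := by
    have := Finset.single_le_sum (f := d) (fun i _ => hd0 i) (Finset.mem_univ k₀)
    linarith [this, hsum]
  have hxN : 1 ≤ n * x := by
    have h1 : ∑ i : Fin N, d i ≤ ∑ _i : Fin N, x :=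
      Finset.sum_le_sum fun i _ => hk₀ i
    simp only [Finset.sum_const, Finset.card_univ, Fintype.card_fin, nsmul_eq_mul] at h1
    rw [hsum] at h1; exact h1
  have hx0 : 0 ≤ x := hd0 k₀
  have habs : ∀ i k : Fin N, ‖ρ i k‖ ≤ Real.sqrt (d i) * Real.sqrt (d k) := by
    intro i k
    rw [← Real.sqrt_mul (hd0 i)]
    rw [Real.le_sqrt (norm_nonneg _) (mul_nonneg (hd0 i) (hd0 k))]
    exact psd_offdiag ρ hρ i k
  set s : ℝ := ∑ i, Real.sqrt (d i) with hs
  set S : ℝ := ∑ i, ∑ k, if i ≠ k then ‖ρ i k‖ else 0 with hS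
  have hSnn : 0 ≤ S := by
    apply Finset.sum_nonneg; intro i _; apply Finset.sum_nonneg; intro k _
    split_ifs
    · exact norm_nonneg _
    · exact le_rfl
  have hsx : ∀ i, Real.sqrt (d i) * Real.sqrt (d i) = d i := fun i => Real.mul_self_sqrt (hd0 i)
  have hSle : S ≤ s^2 - 1 := by
    have h1 : S ≤ ∑ i, ∑ k, (if i ≠ k then Real.sqrt (d i) * Real.sqrt (d k) else 0) := by
      apply Finset.sum_le_sum; intro i _; apply Finset.sum_le_sum; intro k _
      split_ifs with h
      · exact habs i k
      · exact le_rfl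
    have h2 : ∑ i, ∑ k, (if i ≠ k then Real.sqrt (d i) * Real.sqrt (d k) else 0)
        = s^2 - 1 := by
      have e1 : ∀ i k : Fin N, (if i ≠ k then Real.sqrt (d i) * Real.sqrt (d k) else 0)
          = Real.sqrt (d i) * Real.sqrt (d k)
            - (if k = i then Real.sqrt (d i) * Real.sqrt (d k) else 0) := by
        intro i k; by_cases h : i = k <;> simp [h, eq_comm]
      simp only [e1, Finset.sum_sub_distrib]
      rw [← Finset.sum_mul_sum Finset.univ Finset.univ
        (fun i => Real.sqrt (d i)) (fun k => Real.sqrt (d k))]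
      simp only [Finset.sum_ite_eq', Finset.mem_univ, if_true, hsx, hsum]
      rw [← hs, sq]
    linarith [h1, h2]
  -- Cauchy-Schwarz on the rest
  set r : ℝ := ∑ i ∈ Finset.univ.erase k₀, Real.sqrt (d i) with hr
  have hr0 : 0 ≤ r := Finset.sum_nonneg fun i _ => Real.sqrt_nonneg _
  have hsr : s = Real.sqrt x + r := by
    rw [hs, ← Finset.add_sum_erase _ _ (Finset.mem_univ k₀)]
  have herase : ∑ i ∈ Finset.univ.erase k₀, d i = 1 - x := by
    have h := Finset.add_sum_erase Finset.univ d (Finset.mem_univ k₀)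
    rw [hsum] at h; linarith [h]
  have hcard : (((Finset.univ.erase k₀).card : ℕ) : ℝ) = m := by
    rw [Finset.card_erase_of_mem (Finset.mem_univ k₀), Finset.card_univ, Fintype.card_fin]
    rw [Nat.cast_sub (by omega), hmdef, hn]; norm_num
  have hr2 : r^2 ≤ m * (1 - x) := by
    have h := Finset.sum_mul_sq_le_sq_mul_sq (Finset.univ.erase k₀)
      (fun i => Real.sqrt (d i)) (fun _ => 1)
    simp only [mul_one, one_pow, Finset.sum_const, nsmul_eq_mul] at h
    have e : ∑ i ∈ Finset.univ.erase k₀, (Real.sqrt (d i))^2 = 1 - x := by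
      rw [← herase]; apply Finset.sum_congr rfl; intro i _; exact Real.sq_sqrt (hd0 i)
    rw [e, hcard] at h
    rw [← hr] at h
    linarith [h]
  have h1x : 0 ≤ 1 - x := by linarith
  set R : ℝ := Real.sqrt (m*(1-x)) with hR
  have hR0 : 0 ≤ R := Real.sqrt_nonneg _
  have hrR : r ≤ R := by
    rw [hR, Real.le_sqrt hr0 (mul_nonneg hm.le h1x)]
    exact hr2
  set w : ℝ := Real.sqrt x * R with hw
  have hw0 : 0 ≤ w := mul_nonneg (Real.sqrt_nonneg _) hR0
  have hw2 : w^2 = x * (m*(1-x)) := by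
    rw [hw, mul_pow, Real.sq_sqrt hx0, hR, Real.sq_sqrt (mul_nonneg hm.le h1x)]
  have hB0 : 0 ≤ 1 + (n-2)*x := by nlinarith
  have hwb : 2*w ≤ 1 + (n-2)*x := by
    have h1 : (2*w)^2 ≤ (1 + (n-2)*x)^2 := by nlinarith [hw2, sq_nonneg (n*x - 1)]
    calc 2*w = Real.sqrt ((2*w)^2) := (Real.sqrt_sq (by linarith : (0:ℝ) ≤ 2*w)).symm
      _ ≤ Real.sqrt ((1+(n-2)*x)^2) := Real.sqrt_le_sqrt h1
      _ = 1 + (n-2)*x := Real.sqrt_sq hB0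
  have hK0 : 0 ≤ (n-2)*(1-x) + 2*w := by nlinarith
  have hSK : S ≤ (n-2)*(1-x) + 2*w := by
    have h2 : Real.sqrt x * r ≤ Real.sqrt x * R :=
      mul_le_mul_of_nonneg_left hrR (Real.sqrt_nonneg x)
    have h3 : s^2 = x + 2*(Real.sqrt x * r) + r^2 := by
      rw [hsr]; have := hsx k₀; rw [← hxdef] at this; nlinarith [this]
    nlinarith [hSle, hr2, h2, h3]
  -- final algebra
  have hw2' : w ^ 2 = x * ((n - 1) * (1 - x)) := by rw [hw2, hmdef]
  have hgoal : (n*x-1)^2 + ((n-2)*(1-x)+2*w)^2 ≤ (n-1)^2 := by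
    nlinarith [hw2', hwb, hx1, hw0,
      mul_nonneg (mul_nonneg (by linarith : (0:ℝ) ≤ n-2) h1x)
        (by linarith : (0:ℝ) ≤ 1+(n-2)*x - 2*w)]
  have hPv : pred N ρ = (n*x - 1)/m := by rw [pred, hxmax]
  have hCv : coh N ρ = (1/m) * S := by rw [coh]
  have hC0 : 0 ≤ coh N ρ := by
    rw [hCv]; exact mul_nonneg (le_of_lt (div_pos one_pos hm)) hSnn
  have hPm : pred N ρ * m = n*x - 1 := by rw [hPv]; field_simp
  have hCm : coh N ρ * m = S := by rw [hCv]; field_simp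
  have hcm2 : (coh N ρ * m)^2 ≤ ((n-2)*(1-x)+2*w)^2 := by
    apply pow_le_pow_left₀ (mul_nonneg hC0 hm.le)
    rw [hCm]; exact hSK
  have h2 : (pred N ρ * m)^2 + (coh N ρ * m)^2 ≤ m^2 := by
    have hmm : m^2 = (n-1)^2 := by rw [hmdef]
    rw [hPm]; linarith [hcm2, hgoal, hmm]
  have h3 : (pred N ρ ^ 2 + coh N ρ ^ 2) * m ^ 2 ≤ 1 * m ^ 2 := by
    calc (pred N ρ ^ 2 + coh N ρ ^ 2) * m ^ 2
        = (pred N ρ * m) ^ 2 + (coh N ρ * m) ^ 2 := by ring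
      _ ≤ m ^ 2 := h2
      _ = 1 * m ^ 2 := by ring
  exact le_of_mul_le_mul_right h3 (pow_pos hm 2)
end

section
/- Let N ≥ 2 and let ρ be an N×N density matrix. Then equality P(ρ)² + C(ρ)² + S_L(ρ) = 1 holds if and only if both of the following hold: (i) all diagonal elements of ρ, except one maximal element p₁, are equal (each equal to (1 − p₁)/(N − 1)), and (ii) all off-diagonal elements of ρ have the same modulus. -/
open Matrix BigOperators ComplexOrder

lemma var_id {ι : Type*} (s : Finset ι) (f : ι → ℝ) :
    (∑ x ∈ s, ∑ y ∈ s, (f x - f y) ^ 2)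
      = 2 * ((s.card : ℝ) * ∑ x ∈ s, f x ^ 2 - (∑ x ∈ s, f x) ^ 2) := by
  have h : ∀ x ∈ s, ∑ y ∈ s, (f x - f y) ^ 2
      = (s.card : ℝ) * f x ^ 2 - 2 * f x * ∑ y ∈ s, f y + ∑ y ∈ s, f y ^ 2 := by
    intro x _
    have h2 : ∀ y ∈ s, (f x - f y) ^ 2 = f x ^2 - 2 * f x * f y + f y ^2 := by
      intros; ring
    rw [Finset.sum_congr rfl h2, Finset.sum_add_distrib, Finset.sum_sub_distrib,
      Finset.sum_const, ← Finset.mul_sum, nsmul_eq_mul]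
  rw [Finset.sum_congr rfl h, Finset.sum_add_distrib, Finset.sum_sub_distrib,
    Finset.sum_const, ← Finset.mul_sum, ← Finset.sum_mul, ← Finset.mul_sum, nsmul_eq_mul]
  ring

/-- Equality case of the TCR: P(ρ)² + C(ρ)² + S_L(ρ) = 1 iff (i) all diagonal
entries of ρ except one maximal entry p₁ equal (1−p₁)/(N−1), and (ii) all
off-diagonal entries of ρ have the same modulus. -/
theorem stmt7 {N : ℕ} (hN : 2 ≤ N) (ρ : Matrix (Fin N) (Fin N) ℂ)
    (hρ : ρ.PosSemidef) (htr : ρ.trace = 1) :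
    (pred N ρ) ^ 2 + (coh N ρ) ^ 2 + linEnt N ρ = 1 ↔
    ((∃ k₀ : Fin N, (ρ k₀ k₀).re = maxDiag N ρ ∧
        ∀ k : Fin N, k ≠ k₀ → (ρ k k).re = (1 - maxDiag N ρ) / ((N : ℝ) - 1)) ∧
      (∀ i k l m : Fin N, i ≠ k → l ≠ m →
        ‖ρ i k‖ = ‖ρ l m‖)) := by
  classical
  have hNpos : 0 < N := by omega
  haveI : Nonempty (Fin N) := Fin.pos_iff_nonempty.mp hNpos
  have hNR : (2:ℝ) ≤ (N:ℝ) := by exact_mod_cast hN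
  have hM : (0:ℝ) < (N:ℝ) - 1 := by linarith
  have hM' : ((N:ℝ) - 1) ≠ 0 := ne_of_gt hM
  -- hermitian facts
  have hherm : ∀ i j, ρ j i = starRingEnd ℂ (ρ i j) := by
    intro i j
    have h := congrFun (congrFun hρ.1 j) i
    rw [Matrix.conjTranspose_apply] at h
    exact h.symm
  have hdiag : ∀ k, ρ k k = ((ρ k k).re : ℂ) := by
    intro k
    exact (Complex.conj_eq_iff_re.mp (hherm k k).symm).symm
  have hsump : ∑ k, (ρ k k).re = 1 := by
    have := congrArg Complex.re htr
    simpa [Matrix.trace, Matrix.diag, Complex.re_sum] using this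
  have htr2 : ((ρ * ρ).trace).re = ∑ i, ∑ j, ‖ρ i j‖ ^ 2 := by
    have h1 : (ρ * ρ).trace = ∑ i, ∑ j, ρ i j * ρ j i := by
      simp [Matrix.trace, Matrix.diag, Matrix.mul_apply]
    rw [h1, Complex.re_sum]
    congr 1; ext i
    rw [Complex.re_sum]
    congr 1; ext j
    rw [hherm i j, Complex.mul_conj, Complex.sq_norm]
    simp
  -- max index
  obtain ⟨k₀, hk₀⟩ := Finite.exists_max (fun k => (ρ k k).re)
  have hmax : maxDiag N ρ = (ρ k₀ k₀).re := by
    unfold maxDiag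
    refine le_antisymm (ciSup_le hk₀)
      (le_ciSup (f := fun k => (ρ k k).re) (Set.Finite.bddAbove (Set.finite_range _)) k₀)
  set P1 : ℝ := (ρ k₀ k₀).re with hP1
  set Sp2 : ℝ := ∑ k, (ρ k k).re ^ 2 with hSp2
  set A : ℝ := ∑ i, ∑ j, if i ≠ j then ‖ρ i j‖ else 0 with hAdef
  set A2 : ℝ := ∑ i, ∑ j, if i ≠ j then ‖ρ i j‖ ^ 2 else 0 with hA2def
  -- finsets
  set s : Finset (Fin N) := Finset.univ.erase k₀ with hs
  set t : Finset (Fin N × Fin N) := Finset.univ.filter (fun q => q.1 ≠ q.2) with ht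
  have hcards : (s.card : ℝ) = (N : ℝ) - 1 := by
    rw [hs, Finset.card_erase_of_mem (Finset.mem_univ _), Finset.card_univ, Fintype.card_fin]
    push_cast [Nat.cast_sub (by omega : 1 ≤ N)]
    ring
  have hcardt : (t.card : ℝ) = (N : ℝ) * ((N : ℝ) - 1) := by
    have h1 : t.card = ∑ q : Fin N × Fin N, if q.1 ≠ q.2 then 1 else 0 := by
      rw [ht, Finset.card_filter]
    rw [h1]
    push_cast
    rw [Fintype.sum_prod_type]
    have h2 : ∀ i : Fin N, (∑ j : Fin N, if i ≠ j then (1:ℝ) else 0) = (N:ℝ) - 1 := by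
      intro i
      have h3 : ∀ j : Fin N, (if i ≠ j then (1:ℝ) else 0) = 1 - if i = j then 1 else 0 := by
        intro j; by_cases h : i = j <;> simp [h]
      rw [Finset.sum_congr rfl (fun j _ => h3 j), Finset.sum_sub_distrib, Finset.sum_const,
        Finset.sum_ite_eq Finset.univ i (fun _ => (1:ℝ))]
      simp
    rw [Finset.sum_congr rfl (fun i _ => h2 i), Finset.sum_const, Finset.card_univ,
      Fintype.card_fin, nsmul_eq_mul]
  -- sum conversions
  have hAconv : ∑ q ∈ t, ‖ρ q.1 q.2‖ = A := by
    rw [ht, Finset.sum_filter, Fintype.sum_prod_type, hAdef]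
  have hA2conv : ∑ q ∈ t, ‖ρ q.1 q.2‖ ^ 2 = A2 := by
    rw [ht, Finset.sum_filter, Fintype.sum_prod_type, hA2def]
  have htr2split : ((ρ * ρ).trace).re = Sp2 + A2 := by
    rw [htr2]
    have h1 : ∀ i j : Fin N, ‖ρ i j‖ ^ 2
        = (if i = j then (ρ i i).re ^ 2 else 0) + (if i ≠ j then ‖ρ i j‖ ^ 2 else 0) := by
      intro i j
      by_cases h : i = j
      · subst h
        simp only [if_pos rfl, ne_eq, not_true_eq_false, if_neg, if_false, add_zero,
          not_false_eq_true]
        rw [hdiag i, Complex.norm_real, Real.norm_eq_abs, sq_abs]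
        simp
      · simp [h]
    calc ∑ i, ∑ j, ‖ρ i j‖ ^ 2
        = ∑ i, ∑ j, ((if i = j then (ρ i i).re ^ 2 else 0)
            + (if i ≠ j then ‖ρ i j‖ ^ 2 else 0)) := by
          refine Finset.sum_congr rfl fun i _ => Finset.sum_congr rfl fun j _ => h1 i j
      _ = Sp2 + A2 := by
          rw [hSp2, hA2def, ← Finset.sum_add_distrib]
          refine Finset.sum_congr rfl fun i _ => ?_
          rw [Finset.sum_add_distrib]
          congr 1
          rw [Finset.sum_ite_eq Finset.univ i (fun _ => (ρ i i).re ^ 2)]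
          simp
  -- sums over s
  have hsd : ∑ k ∈ s, (P1 - (ρ k k).re) = (N:ℝ) * P1 - 1 := by
    rw [hs, Finset.sum_erase _ (by simp [hP1])]
    rw [Finset.sum_sub_distrib, Finset.sum_const, Finset.card_univ, Fintype.card_fin,
      hsump, nsmul_eq_mul]
  have hsd2 : ∑ k ∈ s, (P1 - (ρ k k).re) ^ 2 = (N:ℝ) * P1 ^ 2 - 2 * P1 + Sp2 := by
    rw [hs, Finset.sum_erase _ (by simp [hP1])]
    have h3 : ∀ k : Fin N, (P1 - (ρ k k).re) ^ 2
        = P1 ^ 2 - 2 * P1 * (ρ k k).re + (ρ k k).re ^ 2 := fun k => by ring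
    rw [Finset.sum_congr rfl (fun k _ => h3 k), Finset.sum_add_distrib,
      Finset.sum_sub_distrib, Finset.sum_const, ← Finset.mul_sum, hsump,
      Finset.card_univ, Fintype.card_fin, nsmul_eq_mul, ← hSp2]
    ring
  -- the gap
  set T1 : ℝ := ∑ k ∈ s, ∑ l ∈ s, ((P1 - (ρ k k).re) - (P1 - (ρ l l).re)) ^ 2 with hT1def
  set T2 : ℝ := ∑ q ∈ t, ∑ r ∈ t,
      (‖ρ q.1 q.2‖ - ‖ρ r.1 r.2‖) ^ 2 with hT2def
  set Gap : ℝ := ((N:ℝ) - 1) * ((N:ℝ) * Sp2 - 1) + (N:ℝ) * ((N:ℝ) - 1) * A2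
      - ((N:ℝ) * P1 - 1) ^ 2 - A ^ 2 with hGapdef
  have hGapT : Gap = (N:ℝ) * T1 / 2 + T2 / 2 := by
    rw [hGapdef, hT1def, hT2def, var_id s (fun k => P1 - (ρ k k).re),
      var_id t (fun q => ‖ρ q.1 q.2‖), hcards, hcardt, hsd, hsd2,
      hAconv, hA2conv]
    ring
  -- key equivalence with the gap
  have hkey : (pred N ρ) ^ 2 + (coh N ρ) ^ 2 + linEnt N ρ = 1 ↔ Gap = 0 := by
    have heq : (pred N ρ) ^ 2 + (coh N ρ) ^ 2 + linEnt N ρ - 1 = -Gap / ((N:ℝ) - 1) ^ 2 := by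
      unfold pred coh linEnt
      rw [hmax, htr2split, ← hAdef, hGapdef]
      field_simp
      ring
    constructor
    · intro h
      have h0 : -Gap / ((N:ℝ) - 1) ^ 2 = 0 := by rw [← heq, h]; ring
      have h1 : -Gap = 0 := by
        rcases div_eq_zero_iff.mp h0 with h2 | h2
        · exact h2
        · exact absurd h2 (pow_ne_zero 2 hM')
      linarith
    · intro h
      have : (pred N ρ) ^ 2 + (coh N ρ) ^ 2 + linEnt N ρ - 1 = 0 := by
        rw [heq, h]; simp
      linarith
  -- nonnegativity
  have hT1nn : 0 ≤ T1 :=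
    Finset.sum_nonneg fun _ _ => Finset.sum_nonneg fun _ _ => sq_nonneg _
  have hT2nn : 0 ≤ T2 :=
    Finset.sum_nonneg fun _ _ => Finset.sum_nonneg fun _ _ => sq_nonneg _
  have hNR0 : (0:ℝ) < (N:ℝ) := by linarith
  have hGap0 : Gap = 0 ↔ T1 = 0 ∧ T2 = 0 := by
    rw [hGapT]
    constructor
    · intro h
      have h1 : 0 ≤ (N:ℝ) * T1 / 2 :=
        div_nonneg (mul_nonneg (Nat.cast_nonneg N) hT1nn) (by norm_num)
      have h2 : 0 ≤ T2 / 2 := div_nonneg hT2nn (by norm_num)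
      constructor
      · have : (N:ℝ) * T1 = 0 := by linarith
        rcases mul_eq_zero.mp this with h3 | h3
        · exact absurd h3 (ne_of_gt hNR0)
        · exact h3
      · linarith
    · rintro ⟨h1, h2⟩
      rw [h1, h2]; ring
  -- characterization of T1 = 0 and T2 = 0
  have hT1zero : T1 = 0 ↔ ∀ k ∈ s, ∀ l ∈ s, (ρ k k).re = (ρ l l).re := by
    rw [hT1def]
    constructor
    · intro h k hk l hl
      have h1 := (Finset.sum_eq_zero_iff_of_nonneg
        (fun x _ => Finset.sum_nonneg fun y _ => sq_nonneg _)).mp h k hk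
      have h2 := (Finset.sum_eq_zero_iff_of_nonneg (fun y _ => sq_nonneg _)).mp h1 l hl
      have h3 := pow_eq_zero_iff (two_ne_zero) |>.mp h2
      have h4 := sub_eq_zero.mp h3
      linarith
    · intro h
      refine Finset.sum_eq_zero fun k hk => Finset.sum_eq_zero fun l hl => ?_
      rw [h k hk l hl]; ring
  have hT2zero : T2 = 0 ↔ ∀ q ∈ t, ∀ r ∈ t,
      ‖ρ q.1 q.2‖ = ‖ρ r.1 r.2‖ := by
    rw [hT2def]
    constructor
    · intro h q hq r hr
      have h1 := (Finset.sum_eq_zero_iff_of_nonneg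
        (fun x _ => Finset.sum_nonneg fun y _ => sq_nonneg _)).mp h q hq
      have h2 := (Finset.sum_eq_zero_iff_of_nonneg (fun y _ => sq_nonneg _)).mp h1 r hr
      have h3 := pow_eq_zero_iff (two_ne_zero) |>.mp h2
      linarith [sub_eq_zero.mp h3]
    · intro h
      refine Finset.sum_eq_zero fun q hq => Finset.sum_eq_zero fun r hr => ?_
      rw [h q hq r hr]; ring
  have hmemt : ∀ i j : Fin N, i ≠ j → (i, j) ∈ t := by
    intro i j hij
    rw [ht, Finset.mem_filter]
    exact ⟨Finset.mem_univ _, hij⟩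
  -- final assembly
  rw [hkey, hGap0, hT1zero, hT2zero]
  constructor
  · rintro ⟨h1, h2⟩
    constructor
    · refine ⟨k₀, hmax.symm, ?_⟩
      intro k hk
      have hks : k ∈ s := Finset.mem_erase.mpr ⟨hk, Finset.mem_univ _⟩
      have hsum_s : ∑ l ∈ s, (ρ l l).re = 1 - P1 := by
        rw [hs, Finset.sum_erase_eq_sub (Finset.mem_univ k₀), hsump]
      have hconst : ∑ l ∈ s, (ρ l l).re = (s.card : ℝ) * (ρ k k).re := by
        rw [Finset.sum_congr rfl (fun l hl => h1 l hl k hks), Finset.sum_const, nsmul_eq_mul]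
      rw [hmax]
      rw [hconst, hcards] at hsum_s
      field_simp
      linarith
    · intro i k l m hik hlm
      exact h2 (i, k) (hmemt i k hik) (l, m) (hmemt l m hlm)
  · rintro ⟨⟨k₀', h1', h2'⟩, hmod⟩
    constructor
    · -- T1 condition
      by_cases hc : k₀' = k₀
      · subst hc
        intro k hk l hl
        rw [h2' k (Finset.ne_of_mem_erase hk), h2' l (Finset.ne_of_mem_erase hl)]
      · have hPk0' : (ρ k₀' k₀').re = P1 := by rw [h1', hmax]
        have hP1eq : P1 = (1 - maxDiag N ρ) / ((N:ℝ) - 1) := by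
          rw [← h2' k₀ (fun h => hc h.symm)]
        have hall : ∀ k, (ρ k k).re = P1 := by
          intro k
          by_cases hkk : k = k₀'
          · rw [hkk]; exact hPk0'
          · rw [h2' k hkk]; exact hP1eq.symm
        intro k _ l _
        rw [hall k, hall l]
    · -- T2 condition
      intro q hq r hr
      rw [ht] at hq hr
      have hq' : q.1 ≠ q.2 := (Finset.mem_filter.mp hq).2
      have hr' : r.1 ≠ r.2 := (Finset.mem_filter.mp hr).2
      exact hmod q.1 q.2 r.1 r.2 hq' hr'
end

section
/- Let N ≥ 2 and let ρ be an N×N density matrix. Then the Dürr three-term equality holds: P_D(ρ)² + V_D(ρ)² + S_L(ρ) = 1, where P_D(ρ) = sqrt( (N/(N−1)) ∑_j (ρ_jj − 1/N)² ) is Dürr's predictability, V_D(ρ) = sqrt( (N/(N−1)) ∑_{j ≠ k} |ρ_jk|² ) is Dürr's visibility, and S_L is the normalized linear entropy. -/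
open Matrix BigOperators ComplexOrder

/-- Dürr's predictability. -/
noncomputable def durrPred (N : ℕ) (ρ : Matrix (Fin N) (Fin N) ℂ) : ℝ :=
  Real.sqrt (((N : ℝ) / ((N : ℝ) - 1)) * ∑ j, ((ρ j j).re - 1 / (N : ℝ)) ^ 2)

/-- Dürr's visibility. -/
noncomputable def durrVis (N : ℕ) (ρ : Matrix (Fin N) (Fin N) ℂ) : ℝ :=
  Real.sqrt (((N : ℝ) / ((N : ℝ) - 1)) *
    ∑ j, ∑ k, if j ≠ k then (‖ρ j k‖) ^ 2 else 0)

/-- Dürr's three-term equality: P_D(ρ)² + V_D(ρ)² + S_L(ρ) = 1. -/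
theorem stmt11 {N : ℕ} (hN : 2 ≤ N) (ρ : Matrix (Fin N) (Fin N) ℂ)
    (hρ : ρ.PosSemidef) (htr : ρ.trace = 1) :
    (durrPred N ρ) ^ 2 + (durrVis N ρ) ^ 2 + linEnt N ρ = 1 := by
  have hN1 : (1:ℝ) < (N:ℝ) := by exact_mod_cast Nat.lt_of_lt_of_le one_lt_two hN
  have hNne : (N:ℝ) ≠ 0 := by positivity
  have hN1ne : (N:ℝ) - 1 ≠ 0 := by linarith
  have hc : (0:ℝ) ≤ (N:ℝ) / ((N:ℝ) - 1) := by
    apply div_nonneg <;> linarith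
  have herm := hρ.1
  have hconj : ∀ j k, ρ k j = starRingEnd ℂ (ρ j k) := by
    intro j k
    have := congrFun (congrFun herm k) j
    simpa [Matrix.conjTranspose_apply] using this.symm
  -- diagonal entries are real
  have hdiag : ∀ j, (ρ j j).im = 0 := by
    intro j
    have := hconj j j
    have := congrArg Complex.im this
    simp [Complex.conj_im] at this
    linarith
  -- sum of diagonal = 1
  have htr' : ∑ j, (ρ j j).re = 1 := by
    have : (ρ.trace).re = 1 := by rw [htr]; simp
    simpa [Matrix.trace, Matrix.diag, Complex.re_sum] using this
  -- trace of ρ² in terms of abs²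
  have hT : ((ρ * ρ).trace).re = ∑ j, ∑ k, (‖ρ j k‖) ^ 2 := by
    rw [Matrix.trace]
    rw [Complex.re_sum]
    apply Finset.sum_congr rfl
    intro j _
    rw [Matrix.diag_apply, Matrix.mul_apply, Complex.re_sum]
    apply Finset.sum_congr rfl
    intro k _
    rw [hconj j k]
    rw [Complex.mul_conj]
    simp [Complex.sq_norm, Complex.normSq_apply]
  -- split into diagonal + offdiagonal
  have hsplit : ∑ j, ∑ k, (‖ρ j k‖) ^ 2 =
      (∑ j, ((ρ j j).re) ^ 2) +
      ∑ j, ∑ k, (if j ≠ k then (‖ρ j k‖) ^ 2 else 0) := by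
    rw [← Finset.sum_add_distrib]
    apply Finset.sum_congr rfl
    intro j _
    have : ∀ k, (‖ρ j k‖) ^ 2 =
        (if j = k then (‖ρ j k‖) ^ 2 else 0) +
        (if j ≠ k then (‖ρ j k‖) ^ 2 else 0) := by
      intro k; by_cases h : j = k <;> simp [h]
    rw [Finset.sum_congr rfl (fun k _ => this k), Finset.sum_add_distrib]
    congr 1
    rw [Finset.sum_ite_eq (Finset.univ) j (fun k => (‖ρ j k‖) ^ 2)]
    simp [Complex.sq_norm, Complex.normSq_apply, hdiag j]
    ring
  -- expand durrPred²
  have hA : ∑ j, ((ρ j j).re - 1 / (N : ℝ)) ^ 2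
      = (∑ j, ((ρ j j).re) ^ 2) - 1 / (N:ℝ) := by
    have : ∀ j, ((ρ j j).re - 1 / (N : ℝ)) ^ 2 =
        ((ρ j j).re) ^ 2 - (2 / (N:ℝ)) * (ρ j j).re + 1/(N:ℝ)^2 := by
      intro j; field_simp; ring
    rw [Finset.sum_congr rfl (fun j _ => this j)]
    rw [Finset.sum_add_distrib, Finset.sum_sub_distrib, ← Finset.mul_sum, htr']
    simp [Finset.card_univ]
    field_simp
    ring
  have hAnn : 0 ≤ ∑ j, ((ρ j j).re - 1 / (N : ℝ)) ^ 2 := by positivity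
  have hBnn : 0 ≤ ∑ j, ∑ k, (if j ≠ k then (‖ρ j k‖) ^ 2 else 0) := by
    apply Finset.sum_nonneg; intro j _; apply Finset.sum_nonneg; intro k _
    split <;> positivity
  rw [durrPred, durrVis, linEnt, Real.sq_sqrt (mul_nonneg hc hAnn),
    Real.sq_sqrt (mul_nonneg hc hBnn), hT, hsplit, hA]
  field_simp
  ring
end

section
/- Let N ≥ 2, let M ≥ 1, let ρ_1, …, ρ_M be N×N density matrices, and let w_1, …, w_M be nonnegative reals with ∑_i w_i = 1. Define the averages P̄ = ∑_i w_i · P(ρ_i), C̄ = ∑_i w_i · C(ρ_i), and S̄_L = ∑_i w_i · S_L(ρ_i). Then the averaged ternary complementarity relation holds: P̄² + C̄² + S̄_L ≤ 1. -/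
open Matrix BigOperators ComplexOrder

lemma key_ineq {N : ℕ} (hN : 2 ≤ N) (ρ : Matrix (Fin N) (Fin N) ℂ)
    (h : ρ.PosSemidef) (htr : ρ.trace = 1) :
    pred N ρ ^ 2 + coh N ρ ^ 2 + linEnt N ρ ≤ 1 := by
  haveI : NeZero N := ⟨by omega⟩
  have hn2 : (2:ℝ) ≤ (N : ℝ) := by exact_mod_cast hN
  have hc : (0:ℝ) < (N : ℝ) - 1 := by linarith
  set p : Fin N → ℝ := fun k => (ρ k k).re with hp
  have hdnn : ∀ k, 0 ≤ ρ k k := fun k => by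
    exact h.diag_nonneg
  have hp0 : ∀ k, 0 ≤ p k := fun k => (Complex.nonneg_iff.1 (hdnn k)).1
  have hdiag : ∀ k, ρ k k = (p k : ℂ) := fun k => by
    have := (Complex.nonneg_iff.1 (hdnn k)).2
    exact Complex.ext rfl this.symm
  have h1 : ∑ k, p k = 1 := by
    have := congrArg Complex.re htr
    simpa [Matrix.trace, Matrix.diag, Complex.re_sum] using this
  obtain ⟨m, hm⟩ := Finite.exists_max p
  have hmax : maxDiag N ρ = p m := le_antisymm (ciSup_le hm) (le_ciSup (Finite.bddAbove_range _) m)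
  set A : Fin N → Fin N → ℝ := fun i k => ‖ρ i k‖ with hA
  have hAii : ∀ i, A i i = p i := fun i => by
    rw [hA]; simp only; rw [hdiag i, Complex.norm_real, Real.norm_eq_abs, abs_of_nonneg (hp0 i)]
  set D : ℝ := ∑ i, ∑ k, if i ≠ k then A i k else 0 with hD
  set Q : ℝ := ∑ i, ∑ k, if i ≠ k then A i k ^ 2 else 0 with hQ
  set S2 : ℝ := ∑ k, p k ^ 2 with hS2
  have herm : ∀ i k, ρ k i = starRingEnd ℂ (ρ i k) := by
    intro i k
    have := congrFun (congrFun h.1 k) i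
    simpa [Matrix.conjTranspose_apply] using this.symm
  -- trace of ρ² is sum of |ρ_ik|²
  have hT : ((ρ * ρ).trace).re = S2 + Q := by
    have e1 : ((ρ * ρ).trace).re = ∑ i, ∑ k, A i k ^ 2 := by
      rw [Matrix.trace, Complex.re_sum]
      refine Finset.sum_congr rfl fun i _ => ?_
      rw [Matrix.diag_apply, Matrix.mul_apply, Complex.re_sum]
      refine Finset.sum_congr rfl fun k _ => ?_
      rw [herm i k, Complex.mul_conj]
      simp [hA, Complex.sq_norm, Complex.normSq_apply]
    rw [e1, hS2, hQ, ← Finset.sum_add_distrib]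
    refine Finset.sum_congr rfl fun i _ => ?_
    have e2 : ∀ k, A i k ^ 2 = (if i = k then A i k ^ 2 else 0) + (if i ≠ k then A i k ^ 2 else 0) :=
      fun k => by by_cases hik : i = k <;> simp [hik]
    rw [Finset.sum_congr rfl fun k _ => e2 k, Finset.sum_add_distrib, Finset.sum_ite_eq]
    simp [hAii i]
  -- Cauchy-Schwarz for the coherence
  have hCS1 : D ^ 2 ≤ ((N : ℝ) - 1) * ((N : ℝ) * Q) := by
    set s : Finset (Fin N × Fin N) :=
      (Finset.univ ×ˢ Finset.univ).filter (fun x : Fin N × Fin N => x.1 ≠ x.2) with hs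
    have hDs : D = ∑ x ∈ s, A x.1 x.2 := by
      rw [hD, ← Finset.sum_product', hs, Finset.sum_filter]
    have hQs : Q = ∑ x ∈ s, A x.1 x.2 ^ 2 := by
      rw [hQ, ← Finset.sum_product', hs, Finset.sum_filter]
    have hcard : s = Finset.univ.offDiag := by
      ext x; simp [hs, Finset.mem_offDiag]
    have hcard2 : (s.card : ℝ) = (N : ℝ) * (N : ℝ) - (N : ℝ) := by
      rw [hcard, Finset.offDiag_card, Finset.card_univ, Fintype.card_fin]
      rw [Nat.cast_sub (Nat.le_mul_of_pos_left N (by omega))]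
      push_cast; ring
    have := sq_sum_le_card_mul_sum_sq (s := s) (f := fun x => A x.1 x.2)
    rw [← hDs, ← hQs] at this
    calc D ^ 2 ≤ (s.card : ℝ) * Q := this
      _ = ((N : ℝ) - 1) * ((N : ℝ) * Q) := by rw [hcard2]; ring
  -- Cauchy-Schwarz for the predictability
  have hrow : ∀ i, ∑ k, (p i - p k) ^ 2 = (N : ℝ) * p i ^ 2 + S2 - 2 * p i := by
    intro i
    have e : ∑ k, (p i - p k) ^ 2 = ∑ k, (p i ^ 2 + p k ^ 2) - 2 * p i * ∑ k, p k := by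
      rw [Finset.mul_sum, ← Finset.sum_sub_distrib]
      exact Finset.sum_congr rfl fun k _ => by ring
    rw [e, h1, Finset.sum_add_distrib, Finset.sum_const, ← hS2, Finset.card_univ,
      Fintype.card_fin]
    simp only [nsmul_eq_mul]
    ring
  have hdouble : ∑ i, ∑ k, (p i - p k) ^ 2 = 2 * (N : ℝ) * S2 - 2 := by
    rw [Finset.sum_congr rfl fun i _ => hrow i]
    rw [Finset.sum_sub_distrib, Finset.sum_add_distrib, Finset.sum_const, ← Finset.mul_sum,
      ← hS2, ← Finset.mul_sum, h1, Finset.card_univ, Fintype.card_fin]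
    simp only [nsmul_eq_mul]
    ring
  have hcol : ∀ i, (p i - p m) ^ 2 ≤ ∑ k, (p i - p k) ^ 2 := fun i =>
    Finset.single_le_sum (f := fun k => (p i - p k) ^ 2) (fun k _ => sq_nonneg _)
      (Finset.mem_univ m)
  have hbound : 2 * ∑ k, (p m - p k) ^ 2 ≤ ∑ i, ∑ k, (p i - p k) ^ 2 := by
    have e1 : ∑ i, ∑ k, (p i - p k) ^ 2 =
        (∑ k, (p m - p k) ^ 2) + ∑ i ∈ Finset.univ.erase m, ∑ k, (p i - p k) ^ 2 :=
      (Finset.add_sum_erase _ _ (Finset.mem_univ m)).symm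
    have e2 : ∑ i ∈ Finset.univ.erase m, (p i - p m) ^ 2 = ∑ i, (p i - p m) ^ 2 := by
      rw [← Finset.add_sum_erase _ _ (Finset.mem_univ m)]; simp
    have e3 : ∑ i, (p i - p m) ^ 2 = ∑ i, (p m - p i) ^ 2 := by
      refine Finset.sum_congr rfl fun i _ => by ring
    have e4 : ∑ i ∈ Finset.univ.erase m, (p i - p m) ^ 2 ≤
        ∑ i ∈ Finset.univ.erase m, ∑ k, (p i - p k) ^ 2 :=
      Finset.sum_le_sum fun i _ => hcol i
    rw [e1]; rw [e2, e3] at e4; linarith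
  have hsumsq : ∑ k, (p m - p k) ^ 2 ≤ (N : ℝ) * S2 - 1 := by
    rw [hdouble] at hbound; linarith
  have hCS2 : ((N : ℝ) * p m - 1) ^ 2 ≤ ((N : ℝ) - 1) * ((N : ℝ) * S2 - 1) := by
    have e : (N : ℝ) * p m - 1 = ∑ k, (p m - p k) := by
      rw [Finset.sum_sub_distrib, Finset.sum_const, h1, Finset.card_univ, Fintype.card_fin]
      simp only [nsmul_eq_mul]
    have e0 : ∑ k, (p m - p k) = ∑ k ∈ Finset.univ.erase m, (p m - p k) := by
      rw [← Finset.add_sum_erase _ _ (Finset.mem_univ m)]; simp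
    have hcs := sq_sum_le_card_mul_sum_sq (s := Finset.univ.erase m)
      (f := fun k => p m - p k)
    have hcarde : ((Finset.univ.erase m).card : ℝ) = (N : ℝ) - 1 := by
      rw [Finset.card_erase_of_mem (Finset.mem_univ m), Finset.card_univ, Fintype.card_fin,
        Nat.cast_sub (by omega)]
      push_cast
      ring
    have hsub : ∑ k ∈ Finset.univ.erase m, (p m - p k) ^ 2 ≤ ∑ k, (p m - p k) ^ 2 :=
      Finset.sum_le_sum_of_subset_of_nonneg (Finset.subset_univ _) (fun k _ _ => sq_nonneg _)
    calc ((N : ℝ) * p m - 1) ^ 2 = (∑ k ∈ Finset.univ.erase m, (p m - p k)) ^ 2 := by rw [e, e0]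
      _ ≤ ((Finset.univ.erase m).card : ℝ) * ∑ k ∈ Finset.univ.erase m, (p m - p k) ^ 2 := hcs
      _ ≤ ((N : ℝ) - 1) * ((N : ℝ) * S2 - 1) := by
          rw [hcarde]
          exact mul_le_mul_of_nonneg_left (le_trans hsub hsumsq) (by linarith)
  -- assemble
  have hcoh : coh N ρ = 1 / ((N : ℝ) - 1) * D := by
    rw [coh, hD, hA]
  have heq : pred N ρ ^ 2 + coh N ρ ^ 2 + linEnt N ρ =
      (((N : ℝ) * p m - 1) ^ 2 + D ^ 2 + ((N : ℝ) - 1) * ((N : ℝ) * (1 - (S2 + Q)))) / ((N : ℝ) - 1) ^ 2 := by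
    rw [pred, hcoh, linEnt, hmax, hT]
    field_simp
  rw [heq, div_le_one (by positivity)]
  nlinarith [hCS1, hCS2]

lemma jensen_sq {M : ℕ} (w a : Fin M → ℝ) (hw : ∀ i, 0 ≤ w i) (hsum : ∑ i, w i = 1) :
    (∑ i, w i * a i) ^ 2 ≤ ∑ i, w i * a i ^ 2 := by
  have := Finset.sum_sq_le_sum_mul_sum_of_sq_eq_mul Finset.univ
    (r := fun i => w i * a i) (f := w) (g := fun i => w i * a i ^ 2)
    (fun i _ => hw i) (fun i _ => mul_nonneg (hw i) (sq_nonneg _)) (fun i _ => by ring)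
  simpa [hsum] using this

/-- The averaged ternary complementarity relation: P̄² + C̄² + S̄_L ≤ 1. -/
theorem stmt12 {N M : ℕ} (hN : 2 ≤ N) (hM : 1 ≤ M)
    (ρ : Fin M → Matrix (Fin N) (Fin N) ℂ)
    (hρ : ∀ i, (ρ i).PosSemidef) (htr : ∀ i, (ρ i).trace = 1)
    (w : Fin M → ℝ) (hw : ∀ i, 0 ≤ w i) (hsum : ∑ i, w i = 1) :
    (∑ i, w i * pred N (ρ i)) ^ 2 + (∑ i, w i * coh N (ρ i)) ^ 2 +
      ∑ i, w i * linEnt N (ρ i) ≤ 1 := by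
  have h1 := jensen_sq w (fun i => pred N (ρ i)) hw hsum
  have h2 := jensen_sq w (fun i => coh N (ρ i)) hw hsum
  have h3 : ∑ i, w i * (pred N (ρ i) ^ 2 + coh N (ρ i) ^ 2 + linEnt N (ρ i)) ≤ ∑ i, w i * 1 :=
    Finset.sum_le_sum fun i _ =>
      mul_le_mul_of_nonneg_left (key_ineq hN (ρ i) (hρ i) (htr i)) (hw i)
  simp only [mul_add, Finset.sum_add_distrib, mul_one, hsum] at h3
  linarith
end

section
/- Let N ≥ 2 and let ρ₁, ρ₂ be N×N density matrices. For all real a, b with a + b = 1 and a ∈ [0,1], the square root of the normalized linear entropy is concave: sqrt(S_L(a·ρ₁ + b·ρ₂)) ≥ a·sqrt(S_L(ρ₁)) + b·sqrt(S_L(ρ₂)). -/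
open Matrix BigOperators ComplexOrder

/-- The quadratic form of a PSD matrix at `e_i + c e_j`. -/
lemma quad_aux {N : ℕ} (ρ : Matrix (Fin N) (Fin N) ℂ) (h : ρ.PosSemidef) (i j : Fin N)
    (hij : i ≠ j) (c : ℂ) :
    0 ≤ (ρ i i + c * ρ i j + (starRingEnd ℂ) c * ρ j i + (starRingEnd ℂ) c * c * ρ j j).re := by
  have H := h.dotProduct_mulVec_nonneg (Pi.single i 1 + Pi.single j c)
  rw [mulVec_add, star_add, ← Pi.single_star, ← Pi.single_star, add_dotProduct,
    dotProduct_add, dotProduct_add, mulVec_single, mulVec_single, single_dotProduct,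
    single_dotProduct, single_dotProduct, single_dotProduct] at H
  simp only [star_one, Pi.single_eq_same, Pi.single_eq_of_ne hij, Pi.single_eq_of_ne hij.symm,
    mul_one, one_mul, mul_zero, add_zero, zero_add] at H
  rw [Complex.nonneg_iff] at H
  have h1 := H.1
  have e : ρ i i + c * ρ i j + (starRingEnd ℂ) c * ρ j i + (starRingEnd ℂ) c * c * ρ j j
      = ρ i i + ρ i j * c + (star c * ρ j i + star c * (ρ j j * c)) := by
    rw [Complex.star_def]; ring
  rw [e]; simpa [Matrix.col_apply, op_smul_eq_mul] using h1

/-- Diagonal entries of a PSD matrix have nonnegative real part. -/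
lemma diag_re_nonneg {N : ℕ} (ρ : Matrix (Fin N) (Fin N) ℂ) (h : ρ.PosSemidef) (i : Fin N) :
    0 ≤ (ρ i i).re := by
  have H := h.dotProduct_mulVec_nonneg (Pi.single i 1)
  rw [mulVec_single, ← Pi.single_star, single_dotProduct] at H
  rw [Complex.nonneg_iff] at H
  simpa using H.1

/-- 2×2 principal minor bound: |ρ_ij|² ≤ ρ_ii · ρ_jj for PSD ρ. -/
lemma minor_aux {N : ℕ} (ρ : Matrix (Fin N) (Fin N) ℂ) (h : ρ.PosSemidef) (i j : Fin N)
    (hij : i ≠ j) :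
    Complex.normSq (ρ i j) ≤ (ρ i i).re * (ρ j j).re := by
  set q : ℝ := Complex.normSq (ρ i j) with hq
  have hji : ρ j i = (starRingEnd ℂ) (ρ i j) := by
    have := congrFun (congrFun h.1.symm j) i
    simpa [Matrix.conjTranspose_apply] using this
  have key : ∀ t : ℝ, 0 ≤ (ρ i i).re - 2 * t * q + t ^ 2 * q * (ρ j j).re := by
    intro t
    have H := quad_aux ρ h i j hij (-(t : ℂ) * (starRingEnd ℂ) (ρ i j))
    rw [hji] at H
    have hns : (starRingEnd ℂ) (ρ i j) * ρ i j = (q : ℂ) := by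
      rw [mul_comm, Complex.mul_conj, hq]
    have e : ρ i i + -(t : ℂ) * (starRingEnd ℂ) (ρ i j) * ρ i j +
        (starRingEnd ℂ) (-(t : ℂ) * (starRingEnd ℂ) (ρ i j)) * (starRingEnd ℂ) (ρ i j) +
        (starRingEnd ℂ) (-(t : ℂ) * (starRingEnd ℂ) (ρ i j)) * (-(t : ℂ) * (starRingEnd ℂ) (ρ i j))
          * ρ j j
        = ρ i i - 2 * (t : ℂ) * (q : ℂ) + (t : ℂ) ^ 2 * (q : ℂ) * ρ j j := by
      simp only [_root_.map_mul, map_neg, Complex.conj_conj, Complex.conj_ofReal]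
      rw [← hns]; ring
    rw [e] at H
    have him : ((t : ℂ) ^ 2 * (q : ℂ) * ρ j j).re = t ^ 2 * q * (ρ j j).re := by
      have e2 : (t : ℂ) ^ 2 * (q : ℂ) = ((t ^ 2 * q : ℝ) : ℂ) := by push_cast; ring
      rw [e2, Complex.re_ofReal_mul]
    have h2 : ((2 : ℂ) * (t : ℂ) * (q : ℂ)).re = 2 * t * q := by
      have e2 : (2 : ℂ) * (t : ℂ) * (q : ℂ) = ((2 * t * q : ℝ) : ℂ) := by push_cast; ring
      rw [e2, Complex.ofReal_re]
    simpa [Complex.sub_re, Complex.add_re, him, h2] using H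
  have hdi : 0 ≤ (ρ i i).re := diag_re_nonneg ρ h i
  have hdj : 0 ≤ (ρ j j).re := diag_re_nonneg ρ h j
  have hq0 : 0 ≤ q := Complex.normSq_nonneg _
  rcases eq_or_lt_of_le hq0 with h0 | hpos
  · rw [← h0]; positivity
  rcases eq_or_lt_of_le hdj with hj0 | hjpos
  · exfalso
    have H := key (((ρ i i).re + 1) / (2 * q))
    rw [← hj0] at H
    have h2q : (0:ℝ) < 2 * q := by positivity
    field_simp at H
    have hlt : ((ρ i i).re * (2 * q) - 2 * ((ρ i i).re + 1) * q) / (2 * q) < 0 :=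
      div_neg_of_neg_of_pos (by nlinarith) h2q
    linarith
  · have H := key (1 / (ρ j j).re)
    have h2 : (1 / (ρ j j).re) ^ 2 * q * (ρ j j).re = q / (ρ j j).re := by
      field_simp
    rw [h2] at H
    have h3 : 2 * (1 / (ρ j j).re) * q = 2 * q / (ρ j j).re := by ring
    rw [h3] at H
    have h4 : 2 * q / (ρ j j).re = 2 * (q / (ρ j j).re) := by ring
    rw [h4] at H
    have H2 : q / (ρ j j).re ≤ (ρ i i).re := by linarith
    calc q = q / (ρ j j).re * (ρ j j).re := by field_simp
    _ ≤ (ρ i i).re * (ρ j j).re := by nlinarith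

/-- tr(ρσ).re as an entrywise sum. -/
lemma trace_mul_re {N : ℕ} (ρ σ : Matrix (Fin N) (Fin N) ℂ) :
    ((ρ * σ).trace).re = ∑ i, ∑ j, (ρ i j * σ j i).re := by
  rw [Matrix.trace, Complex.re_sum]
  refine Finset.sum_congr rfl fun i _ => ?_
  rw [Matrix.diag_apply, Matrix.mul_apply, Complex.re_sum]

lemma trace_sq_re {N : ℕ} (ρ : Matrix (Fin N) (Fin N) ℂ) (h : ρ.IsHermitian) :
    ((ρ * ρ).trace).re = ∑ i, ∑ j, Complex.normSq (ρ i j) := by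
  rw [trace_mul_re]
  refine Finset.sum_congr rfl fun i _ => Finset.sum_congr rfl fun j _ => ?_
  have hji : ρ j i = (starRingEnd ℂ) (ρ i j) := by
    have := congrFun (congrFun h.symm j) i
    simpa [Matrix.conjTranspose_apply] using this
  rw [hji, Complex.mul_conj]
  simp

/-- For a PSD matrix of trace 1, the purity is at most 1. -/
lemma purity_le_one {N : ℕ} (ρ : Matrix (Fin N) (Fin N) ℂ) (h : ρ.PosSemidef)
    (htr : ρ.trace = 1) : ((ρ * ρ).trace).re ≤ 1 := by
  have hsum : ∑ i, (ρ i i).re = 1 := by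
    have : (ρ.trace).re = 1 := by rw [htr]; simp
    rw [Matrix.trace, Complex.re_sum] at this
    simpa using this
  rw [trace_sq_re ρ h.1]
  have hbd : ∀ i j : Fin N, Complex.normSq (ρ i j) ≤ (ρ i i).re * (ρ j j).re := by
    intro i j
    rcases eq_or_ne i j with rfl | hij
    · have him : (ρ i i).im = 0 := by
        have H := h.dotProduct_mulVec_nonneg (Pi.single i 1)
        rw [mulVec_single, ← Pi.single_star, single_dotProduct] at H
        rw [Complex.nonneg_iff] at H
        simpa using H.2.symm
      rw [Complex.normSq_apply, him]
      ring_nf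
      simp
    · exact minor_aux ρ h i j hij
  calc ∑ i, ∑ j, Complex.normSq (ρ i j) ≤ ∑ i, ∑ j, (ρ i i).re * (ρ j j).re := by
        refine Finset.sum_le_sum fun i _ => Finset.sum_le_sum fun j _ => hbd i j
    _ = (∑ i, (ρ i i).re) * (∑ j, (ρ j j).re) := by
        rw [Finset.sum_mul_sum]
    _ = 1 := by rw [hsum]; ring

lemma purity_nonneg {N : ℕ} (ρ : Matrix (Fin N) (Fin N) ℂ) (h : ρ.IsHermitian) :
    0 ≤ ((ρ * ρ).trace).re := by
  rw [trace_sq_re ρ h]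
  exact Finset.sum_nonneg fun i _ => Finset.sum_nonneg fun j _ => Complex.normSq_nonneg _

/-- Cauchy–Schwarz for the cross term. -/
lemma cross_le {N : ℕ} (ρ₁ ρ₂ : Matrix (Fin N) (Fin N) ℂ)
    (h₁ : ρ₁.IsHermitian) (h₂ : ρ₂.IsHermitian) :
    ((ρ₁ * ρ₂).trace).re ≤
      Real.sqrt (((ρ₁ * ρ₁).trace).re) * Real.sqrt (((ρ₂ * ρ₂).trace).re) := by
  set S : ℝ := ∑ q : Fin N × Fin N, ‖ρ₁ q.1 q.2‖ * ‖ρ₂ q.2 q.1‖ with hS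
  have hstep : ((ρ₁ * ρ₂).trace).re ≤ S := by
    rw [hS, Fintype.sum_prod_type, trace_mul_re]
    refine Finset.sum_le_sum fun i _ => Finset.sum_le_sum fun j _ => ?_
    calc (ρ₁ i j * ρ₂ j i).re ≤ ‖ρ₁ i j * ρ₂ j i‖ := Complex.re_le_norm _
    _ = _ := by rw [norm_mul]
  have hx : ∑ q : Fin N × Fin N, ‖ρ₁ q.1 q.2‖ ^ 2 = ((ρ₁ * ρ₁).trace).re := by
    rw [trace_sq_re ρ₁ h₁, Fintype.sum_prod_type]
    simp [Complex.sq_norm]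
  have hy : ∑ q : Fin N × Fin N, ‖ρ₂ q.2 q.1‖ ^ 2 = ((ρ₂ * ρ₂).trace).re := by
    rw [trace_sq_re ρ₂ h₂, Fintype.sum_prod_type]
    rw [Finset.sum_comm]
    simp [Complex.sq_norm]
  have hcs := Finset.sum_mul_sq_le_sq_mul_sq Finset.univ
    (fun q : Fin N × Fin N => ‖ρ₁ q.1 q.2‖)
    (fun q : Fin N × Fin N => ‖ρ₂ q.2 q.1‖)
  rw [hx, hy] at hcs
  have hS0 : 0 ≤ S := Finset.sum_nonneg fun q _ =>
    mul_nonneg (norm_nonneg _) (norm_nonneg _)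
  have hx0 : 0 ≤ ((ρ₁ * ρ₁).trace).re := purity_nonneg ρ₁ h₁
  have hy0 : 0 ≤ ((ρ₂ * ρ₂).trace).re := purity_nonneg ρ₂ h₂
  have hle : S ≤ Real.sqrt (((ρ₁ * ρ₁).trace).re) * Real.sqrt (((ρ₂ * ρ₂).trace).re) := by
    rw [← Real.sqrt_mul hx0]
    rw [Real.le_sqrt hS0 (mul_nonneg hx0 hy0)]
    exact hcs
  exact hstep.trans hle

set_option maxHeartbeats 1000000 in
/-- Concavity of the square root of the normalized linear entropy. -/
theorem stmt14 {N : ℕ} (hN : 2 ≤ N) (ρ₁ ρ₂ : Matrix (Fin N) (Fin N) ℂ)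
    (hρ₁ : ρ₁.PosSemidef) (htr₁ : ρ₁.trace = 1)
    (hρ₂ : ρ₂.PosSemidef) (htr₂ : ρ₂.trace = 1)
    (a b : ℝ) (hab : a + b = 1) (ha0 : 0 ≤ a) (ha1 : a ≤ 1) :
    Real.sqrt (linEnt N ((a : ℂ) • ρ₁ + (b : ℂ) • ρ₂)) ≥
      a * Real.sqrt (linEnt N ρ₁) + b * Real.sqrt (linEnt N ρ₂) := by
  have hb0 : 0 ≤ b := by linarith
  set x : ℝ := ((ρ₁ * ρ₁).trace).re with hxdef
  set y : ℝ := ((ρ₂ * ρ₂).trace).re with hydef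
  set p : ℝ := ((ρ₁ * ρ₂).trace).re with hpdef
  have hx0 : 0 ≤ x := purity_nonneg ρ₁ hρ₁.1
  have hy0 : 0 ≤ y := purity_nonneg ρ₂ hρ₂.1
  have hx1 : x ≤ 1 := purity_le_one ρ₁ hρ₁ htr₁
  have hy1 : y ≤ 1 := purity_le_one ρ₂ hρ₂ htr₂
  have hp : p ≤ Real.sqrt x * Real.sqrt y := cross_le ρ₁ ρ₂ hρ₁.1 hρ₂.1
  -- expand the trace of the square of the mixture
  have hsM : ((((a : ℂ) • ρ₁ + (b : ℂ) • ρ₂) * ((a : ℂ) • ρ₁ + (b : ℂ) • ρ₂)).trace).re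
      = a ^ 2 * x + 2 * (a * b) * p + b ^ 2 * y := by
    have expand : ((a : ℂ) • ρ₁ + (b : ℂ) • ρ₂) * ((a : ℂ) • ρ₁ + (b : ℂ) • ρ₂)
        = ((a : ℂ) * (a : ℂ)) • (ρ₁ * ρ₁) + ((a : ℂ) * (b : ℂ)) • (ρ₁ * ρ₂)
          + ((a : ℂ) * (b : ℂ)) • (ρ₂ * ρ₁) + ((b : ℂ) * (b : ℂ)) • (ρ₂ * ρ₂) := by
      simp only [add_mul, mul_add, smul_mul_assoc, mul_smul_comm, smul_smul]
      module
    rw [expand, trace_add, trace_add, trace_add, trace_smul, trace_smul, trace_smul,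
      trace_smul, trace_mul_comm ρ₂ ρ₁]
    have e1 : ((a : ℂ) * (a : ℂ)) = ((a * a : ℝ) : ℂ) := by push_cast; ring
    have e2 : ((a : ℂ) * (b : ℂ)) = ((a * b : ℝ) : ℂ) := by push_cast; ring
    have e3 : ((b : ℂ) * (b : ℂ)) = ((b * b : ℝ) : ℂ) := by push_cast; ring
    rw [e1, e2, e3]
    simp only [smul_eq_mul, Complex.add_re, Complex.re_ofReal_mul]
    rw [← hxdef, ← hydef, ← hpdef]
    ring
  -- rewrite linEnt as c * (1 - purity)
  set c : ℝ := (N : ℝ) / ((N : ℝ) - 1) with hcdef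
  have hc0 : 0 ≤ c := by
    have : (2 : ℝ) ≤ (N : ℝ) := by exact_mod_cast hN
    apply div_nonneg <;> linarith
  have hLE : ∀ ρ : Matrix (Fin N) (Fin N) ℂ, linEnt N ρ = c * (1 - ((ρ * ρ).trace).re) := by
    intro ρ; rw [linEnt, hcdef]; ring
  rw [hLE, hLE, hLE, hsM]
  rw [Real.sqrt_mul hc0, Real.sqrt_mul hc0, Real.sqrt_mul hc0]
  set u : ℝ := Real.sqrt (1 - x) with hudef
  set v : ℝ := Real.sqrt (1 - y) with hvdef
  set sx : ℝ := Real.sqrt x with hsxdef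
  set sy : ℝ := Real.sqrt y with hsydef
  have hu0 : 0 ≤ u := Real.sqrt_nonneg _
  have hv0 : 0 ≤ v := Real.sqrt_nonneg _
  have hsx0 : 0 ≤ sx := Real.sqrt_nonneg _
  have hsy0 : 0 ≤ sy := Real.sqrt_nonneg _
  have hu2 : u ^ 2 = 1 - x := Real.sq_sqrt (by linarith)
  have hv2 : v ^ 2 = 1 - y := Real.sq_sqrt (by linarith)
  have hsx2 : sx ^ 2 = x := Real.sq_sqrt hx0
  have hsy2 : sy ^ 2 = y := Real.sq_sqrt hy0
  -- two-variable Cauchy-Schwarz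
  have hw2 : (u * v + sx * sy) ^ 2 ≤ (u ^ 2 + sx ^ 2) * (v ^ 2 + sy ^ 2) := by
    nlinarith [sq_nonneg (u * sy - v * sx)]
  have hw2' : (u * v + sx * sy) ^ 2 ≤ 1 := by
    rw [hu2, hv2, hsx2, hsy2] at hw2
    calc (u * v + sx * sy) ^ 2 ≤ (1 - x + x) * (1 - y + y) := hw2
      _ = 1 := by ring
  have hw : u * v + sx * sy ≤ 1 := by
    nlinarith [hw2', sq_nonneg (u * v + sx * sy - 1)]
  have h5 : u * v + p ≤ 1 := by linarith
  have hab0 : 0 ≤ a * b := mul_nonneg ha0 hb0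
  have hprod : 0 ≤ (a * b) * (1 - (u * v + p)) := mul_nonneg hab0 (by linarith)
  have habsq : a ^ 2 + 2 * (a * b) + b ^ 2 = 1 := by
    calc a ^ 2 + 2 * (a * b) + b ^ 2 = (a + b) ^ 2 := by ring
      _ = 1 := by rw [hab]; norm_num
  have hkey : (a * u + b * v) ^ 2 ≤ 1 - (a ^ 2 * x + 2 * (a * b) * p + b ^ 2 * y) := by
    have e : (a * u + b * v) ^ 2 = a ^ 2 * u ^ 2 + 2 * (a * b) * (u * v) + b ^ 2 * v ^ 2 := by
      ring
    rw [e, hu2, hv2]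
    nlinarith [hprod, habsq]
  have hrhs0 : 0 ≤ a * u + b * v := by positivity
  have hmain : a * u + b * v ≤ Real.sqrt (1 - (a ^ 2 * x + 2 * (a * b) * p + b ^ 2 * y)) := by
    rw [← Real.sqrt_sq hrhs0]
    exact Real.sqrt_le_sqrt hkey
  have := mul_le_mul_of_nonneg_left hmain (Real.sqrt_nonneg c)
  calc a * (Real.sqrt c * u) + b * (Real.sqrt c * v)
      = Real.sqrt c * (a * u + b * v) := by ring
    _ ≤ Real.sqrt c * Real.sqrt (1 - (a ^ 2 * x + 2 * (a * b) * p + b ^ 2 * y)) := this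
end

section
/- Let N > 2 and let ρ be an N×N density matrix whose diagonal consists of one entry p₁ and N−1 entries all equal to p₂ = (1 − p₁)/(N − 1) with p₁ ≥ p₂, whose off-diagonal entries all have the same modulus |a|, and suppose |a| ≤ p₂. Then 2·S_L(ρ) ≥ 1 − (P(ρ)² − C(ρ)²)². -/
open Matrix BigOperators ComplexOrder

private theorem sum_aux (N : ℕ) (f : Fin N → ℝ) (k₀ : Fin N) (c : ℝ)
    (h : ∀ k, k ≠ k₀ → f k = c) :
    ∑ k, f k = f k₀ + ((N:ℝ) - 1) * c := by
  have key : ∀ k : Fin N, f k = c + (if k = k₀ then f k₀ - c else 0) := by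
    intro k
    by_cases hk : k = k₀
    · simp [hk]
    · simp [hk, h k hk]
  rw [Finset.sum_congr rfl (fun k _ => key k), Finset.sum_add_distrib,
    Finset.sum_const, Finset.sum_ite_eq' Finset.univ k₀]
  simp [Finset.card_univ]
  ring

set_option maxHeartbeats 1000000 in
/-- For N > 2 and a density matrix of the saturating form (one diagonal entry p₁,
the remaining diagonal entries all equal to p₂ = (1−p₁)/(N−1) with p₁ ≥ p₂,
all off-diagonal entries of common modulus |a| ≤ p₂), we have
2·S_L(ρ) ≥ 1 − (P(ρ)² − C(ρ)²)². -/
theorem stmt15 {N : ℕ} (hN : 2 < N) (ρ : Matrix (Fin N) (Fin N) ℂ)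
    (hρ : ρ.PosSemidef) (htr : ρ.trace = 1)
    (p₁ p₂ amod : ℝ) (k₀ : Fin N)
    (hd₀ : (ρ k₀ k₀).re = p₁)
    (hd : ∀ k : Fin N, k ≠ k₀ → (ρ k k).re = p₂)
    (hp₂ : p₂ = (1 - p₁) / ((N : ℝ) - 1))
    (hord : p₂ ≤ p₁)
    (hoff : ∀ i k : Fin N, i ≠ k → ‖ρ i k‖ = amod)
    (hamod : amod ≤ p₂) :
    2 * linEnt N ρ ≥ 1 - ((pred N ρ) ^ 2 - (coh N ρ) ^ 2) ^ 2 := by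
  have hN3 : (3:ℝ) ≤ (N:ℝ) := by exact_mod_cast hN
  have hn1 : (0:ℝ) < (N:ℝ) - 1 := by linarith
  have h01 : (⟨0, by omega⟩ : Fin N) ≠ ⟨1, by omega⟩ := by simp [Fin.ext_iff]
  have hamod0 : 0 ≤ amod := by
    rw [← hoff _ _ h01]; exact norm_nonneg _
  have h1 : p₂ * ((N:ℝ) - 1) = 1 - p₁ := by
    rw [hp₂]; field_simp
  -- maxDiag = p₁
  haveI : Nonempty (Fin N) := ⟨k₀⟩
  have hmax : maxDiag N ρ = p₁ := by
    apply le_antisymm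
    · apply ciSup_le
      intro k
      by_cases hk : k = k₀
      · rw [hk, hd₀]
      · rw [hd k hk]; exact hord
    · rw [← hd₀]
      show (ρ k₀ k₀).re ≤ ⨆ k, (ρ k k).re
      exact le_ciSup (Set.Finite.bddAbove (Set.finite_range fun k => (ρ k k).re)) k₀
  -- pred = p₁ - p₂
  have hP : pred N ρ = p₁ - p₂ := by
    unfold pred
    rw [hmax, div_eq_iff hn1.ne']
    linear_combination h1
  -- coh = N * amod
  have hC : coh N ρ = (N:ℝ) * amod := by
    unfold coh
    have inner : ∀ i : Fin N,
        (∑ k, if i ≠ k then ‖ρ i k‖ else 0) = ((N:ℝ) - 1) * amod := by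
      intro i
      have key : ∀ k : Fin N,
          (if i ≠ k then ‖ρ i k‖ else 0) = amod - (if i = k then amod else 0) := by
        intro k
        by_cases hk : i = k
        · simp [hk]
        · simp [hk, hoff i k hk]
      rw [Finset.sum_congr rfl (fun k _ => key k), Finset.sum_sub_distrib, Finset.sum_const,
        Finset.sum_ite_eq Finset.univ i]
      simp [Finset.card_univ]
      ring
    rw [Finset.sum_congr rfl (fun i _ => inner i), Finset.sum_const]
    simp [Finset.card_univ]
    field_simp
  -- trace of ρ²
  have hT : ((ρ * ρ).trace).re
      = p₁^2 + ((N:ℝ)-1) * p₂^2 + (N:ℝ) * ((N:ℝ)-1) * amod^2 := by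
    have step1 : ((ρ * ρ).trace).re = ∑ i, ∑ j, Complex.normSq (ρ i j) := by
      rw [Matrix.trace]
      simp only [Matrix.diag, Matrix.mul_apply, Complex.re_sum]
      refine Finset.sum_congr rfl fun i _ => ?_
      refine Finset.sum_congr rfl fun j _ => ?_
      rw [← hρ.1.apply j i, Complex.star_def, Complex.mul_conj, Complex.ofReal_re]
    have him : ∀ i : Fin N, Complex.normSq (ρ i i) = (ρ i i).re ^ 2 := by
      intro i
      have h := hρ.1.apply i i
      rw [Complex.star_def, Complex.conj_eq_iff_im] at h
      rw [Complex.normSq_apply, h]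
      ring
    have inner : ∀ i : Fin N,
        (∑ j, Complex.normSq (ρ i j)) = (ρ i i).re ^ 2 + ((N:ℝ)-1) * amod^2 := by
      intro i
      have := sum_aux N (fun j => Complex.normSq (ρ i j)) i (amod^2) ?_
      · rw [this, him i]
      · intro j hj
        show Complex.normSq (ρ i j) = amod ^ 2
        rw [← Complex.sq_norm, hoff i j (Ne.symm hj)]
    rw [step1, Finset.sum_congr rfl (fun i _ => inner i), Finset.sum_add_distrib,
      Finset.sum_const,
      sum_aux N (fun k => (ρ k k).re ^ 2) k₀ (p₂^2) (fun k hk => by show (ρ k k).re ^ 2 = p₂ ^ 2; rw [hd k hk]), hd₀]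
    simp [Finset.card_univ]
    ring
  -- linEnt = 1 - (p₁-p₂)² - (N amod)²
  have hS : linEnt N ρ = 1 - (p₁ - p₂)^2 - ((N:ℝ) * amod)^2 := by
    unfold linEnt
    rw [hT, div_eq_iff hn1.ne']
    nlinarith [h1, sq_nonneg ((N:ℝ) - 1)]
  rw [hP, hC, hS]
  -- final inequality with P = p₁-p₂ ≥ 0, C = N·amod ≥ 0, P + C ≤ 1
  set P := p₁ - p₂ with hPdef
  set C := (N:ℝ) * amod with hCdef
  have hP0 : 0 ≤ P := by linarith
  have hC0 : 0 ≤ C := by positivity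
  have hPC : P + C ≤ 1 := by
    have : C ≤ (N:ℝ) * p₂ := by
      apply mul_le_mul_of_nonneg_left hamod (by linarith)
    nlinarith [h1]
  have key : (1 - (P + C)^2) * (1 - (P - C)^2) ≥ 0 := by
    apply mul_nonneg
    · nlinarith
    · nlinarith [mul_nonneg hP0 hC0]
  nlinarith [key]
end

section
/- Let N ≥ 2 and let ρ be an N×N density matrix whose diagonal consists of one maximal entry p₁ and N−1 entries all equal to p₂ = (1 − p₁)/(N − 1), and whose off-diagonal entries all have the same modulus. Then the ternary complementarity relation is saturated: P(ρ)² + C(ρ)² + S_L(ρ) = 1. -/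
open Matrix BigOperators ComplexOrder

lemma aux_off {N : ℕ} (c : ℝ) :
    (∑ i : Fin N, ∑ j : Fin N, if i ≠ j then c else 0) = (N:ℝ) * ((N:ℝ) - 1) * c := by
  have h : ∀ i : Fin N, (∑ j : Fin N, if i ≠ j then c else 0) = ((N:ℝ) - 1) * c := by
    intro i
    have : ∀ j : Fin N, (if i ≠ j then c else 0) = c - (if i = j then c else 0) := by
      intro j; by_cases h : i = j <;> simp [h]
    simp only [this, Finset.sum_sub_distrib, Finset.sum_const, Finset.sum_ite_eq,
      Finset.mem_univ, if_true, Finset.card_univ, Fintype.card_fin, nsmul_eq_mul]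
    ring
  simp only [h, Finset.sum_const, Finset.card_univ, Fintype.card_fin, nsmul_eq_mul]
  ring

/-- Saturation of the TCR: for a density matrix whose diagonal has one maximal
entry p₁ and N−1 entries equal to (1−p₁)/(N−1), and whose off-diagonal entries
all have the same modulus, P(ρ)² + C(ρ)² + S_L(ρ) = 1. -/
theorem stmt18 {N : ℕ} (hN : 2 ≤ N) (ρ : Matrix (Fin N) (Fin N) ℂ)
    (hρ : ρ.PosSemidef) (htr : ρ.trace = 1)
    (k₀ : Fin N)
    (hmax : (ρ k₀ k₀).re = maxDiag N ρ)
    (hd : ∀ k : Fin N, k ≠ k₀ →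
      (ρ k k).re = (1 - maxDiag N ρ) / ((N : ℝ) - 1))
    (hoff : ∀ i k l m : Fin N, i ≠ k → l ≠ m →
      ‖ρ i k‖ = ‖ρ l m‖) :
    (pred N ρ) ^ 2 + (coh N ρ) ^ 2 + linEnt N ρ = 1 := by
  set p₁ := maxDiag N ρ with hp1
  set n := (N : ℝ) with hn
  have hn2 : (2:ℝ) ≤ n := by rw [hn]; exact_mod_cast hN
  have hn1 : n - 1 ≠ 0 := by linarith
  set p₂ := (1 - p₁) / (n - 1) with hp2
  -- pick an off-diagonal index
  obtain ⟨i₀, hi₀⟩ : ∃ i : Fin N, i ≠ k₀ :=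
    Fintype.exists_ne_of_one_lt_card (by simp; omega) k₀
  set c := ‖ρ i₀ k₀‖ with hc
  have hoffc : ∀ i j : Fin N, i ≠ j → ‖ρ i j‖ = c := fun i j h =>
    hoff i j i₀ k₀ h hi₀
  -- hermitian facts
  have hherm := hρ.isHermitian
  have hconj : ∀ i j : Fin N, ρ j i = (starRingEnd ℂ) (ρ i j) := by
    intro i j
    have := congrFun (congrFun hherm j) i
    simpa [Matrix.conjTranspose_apply] using this.symm
  have him : ∀ k : Fin N, (ρ k k).im = 0 := by
    intro k
    have := hconj k k
    have := congrArg Complex.im this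
    simp [Complex.conj_im] at this
    linarith
  -- trace of ρ²
  have htrsq : ((ρ * ρ).trace).re = ∑ i, ∑ j, Complex.normSq (ρ i j) := by
    rw [Matrix.trace]
    simp only [Matrix.diag, Matrix.mul_apply, Complex.re_sum]
    refine Finset.sum_congr rfl fun i _ => Finset.sum_congr rfl fun j _ => ?_
    rw [hconj i j, Complex.mul_conj]
    simp
  -- split into diagonal and off-diagonal
  have hsplit : ∀ i j : Fin N, Complex.normSq (ρ i j) =
      (if i = j then (ρ i i).re ^ 2 else 0) + (if i ≠ j then c ^ 2 else 0) := by
    intro i j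
    by_cases h : i = j
    · subst h
      simp [Complex.normSq_apply, him i, sq]
    · simp [h, ← Complex.sq_norm, hoffc i j h]
  have hdiagsum : (∑ i : Fin N, (ρ i i).re ^ 2) = p₁ ^ 2 + (n - 1) * p₂ ^ 2 := by
    rw [← Finset.sum_erase_add _ _ (Finset.mem_univ k₀), hmax]
    have : ∀ k ∈ Finset.univ.erase k₀, (ρ k k).re ^ 2 = p₂ ^ 2 := by
      intro k hk
      rw [hd k (Finset.ne_of_mem_erase hk)]
    rw [Finset.sum_congr rfl this, Finset.sum_const, Finset.card_erase_of_mem (Finset.mem_univ k₀)]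
    simp only [Finset.card_univ, Fintype.card_fin, nsmul_eq_mul]
    have : ((N - 1 : ℕ) : ℝ) = n - 1 := by
      rw [Nat.cast_sub (by omega)]; simp [hn]
    rw [this]; ring
  have h2 : ((ρ * ρ).trace).re = p₁ ^ 2 + (n - 1) * p₂ ^ 2 + n * (n - 1) * c ^ 2 := by
    rw [htrsq]
    simp only [hsplit, Finset.sum_add_distrib]
    rw [aux_off (c ^ 2)]
    congr 1
    rw [← hdiagsum]
    refine Finset.sum_congr rfl fun i _ => ?_
    simp
  -- coherence
  have hcoh : coh N ρ = n * c := by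
    rw [coh]
    have : ∀ i j : Fin N, (if i ≠ j then ‖ρ i j‖ else 0) =
        (if i ≠ j then c else 0) := by
      intro i j; by_cases h : i ≠ j <;> simp [h, hoffc]
    simp only [this]
    rw [aux_off c, ← hn]
    field_simp
  -- assemble
  rw [pred, linEnt, hcoh, h2, ← hp1, ← hn]
  rw [hp2]
  field_simp
  ring
end
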